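/- Let λ > 0, let x ∈ ℝⁿ, and let Ψ : ℝⁿ → ℝ be twice continuously differentiable and positive on a neighborhood of x. Let q ≥ 0 be a real number, f ∈ ℝⁿ, G ∈ ℝ^{n×m}, B ∈ ℝ^{n×l}, let R ∈ ℝ^{m×m} be symmetric positive definite and Σ_ε ∈ ℝ^{l×l} symmetric positive semidefinite, and assume λ·G R⁻¹ Gᵀ = B Σ_ε Bᵀ =: Σ. Suppose (1/λ)·q·Ψ(x) − fᵀ∇Ψ(x) − (1/2)Tr(∇²Ψ(x)·Σ) ≤ 0. Define V = −λ log Ψ and u = −R⁻¹Gᵀ∇V(x). Then (λ/(2Ψ(x)²))·∇Ψ(x)ᵀ Σ ∇Ψ(x) = (1/2)∇V(x)ᵀ G R⁻¹ Gᵀ ∇V(x) = (1/2)uᵀRu, and consequently ∇V(x)ᵀ(f + Gu) + (1/2)Tr(∇²V(x)·B Σ_ε Bᵀ) ≤ −q − (1/2)uᵀRu. (Key inequality in the proof of Theorem 8 bounding the generator of V_u by minus the running cost q + (1/2)uᵀRu.) -/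

import Mathlib

open Matrix

/-- Gradient of a scalar function on `ℝⁿ`, as a vector of directional derivatives. -/
noncomputable def grad {n : ℕ} (Ψ : (Fin n → ℝ) → ℝ) (x : Fin n → ℝ) : Fin n → ℝ :=
  fun i => fderiv ℝ Ψ x (Pi.single i 1)

/-- Hessian matrix of a scalar function on `ℝⁿ`. -/
noncomputable def hess {n : ℕ} (Ψ : (Fin n → ℝ) → ℝ) (x : Fin n → ℝ) :
    Matrix (Fin n) (Fin n) ℝ :=
  Matrix.of fun i j => fderiv ℝ (fun y => fderiv ℝ Ψ y (Pi.single j 1)) x (Pi.single i 1)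

private lemma trace_vecMulVec_mul {n : ℕ} (g : Fin n → ℝ) (S : Matrix (Fin n) (Fin n) ℝ) :
    (Matrix.vecMulVec g g * S).trace = g ⬝ᵥ S.mulVec g := by
  simp [Matrix.trace, Matrix.diag, Matrix.mul_apply, Matrix.vecMulVec_apply, dotProduct,
    Matrix.mulVec, Finset.mul_sum, Finset.sum_mul]
  rw [Finset.sum_comm]
  exact Finset.sum_congr rfl fun i _ => Finset.sum_congr rfl fun j _ => by ring

private lemma dot_mulVec_mulVec {k n p : ℕ} (A : Matrix (Fin k) (Fin n) ℝ)
    (B : Matrix (Fin k) (Fin p) ℝ) (v : Fin n → ℝ) (w : Fin p → ℝ) :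
    (A.mulVec v) ⬝ᵥ (B.mulVec w) = v ⬝ᵥ ((Aᵀ * B).mulVec w) := by
  rw [Matrix.dotProduct_mulVec, ← Matrix.vecMul_transpose, Matrix.vecMul_vecMul,
    ← Matrix.dotProduct_mulVec]

/-- Key inequality in the proof of Theorem 8: the quadratic term equals half the control
energy `(1/2)uᵀRu`, so the generator of `V` along the controlled dynamics is bounded by
minus the running cost `q + (1/2)uᵀRu`. -/
theorem generator_bounded_by_running_cost
    {n m l : ℕ} (lam : ℝ) (hlam : 0 < lam)
    (x : Fin n → ℝ) (Ψ : (Fin n → ℝ) → ℝ)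
    (U : Set (Fin n → ℝ)) (hU : IsOpen U) (hxU : x ∈ U)
    (hC2 : ContDiffOn ℝ 2 Ψ U) (hpos : ∀ y ∈ U, 0 < Ψ y)
    (q : ℝ) (hq : 0 ≤ q) (f : Fin n → ℝ)
    (G : Matrix (Fin n) (Fin m) ℝ) (B : Matrix (Fin n) (Fin l) ℝ)
    (R : Matrix (Fin m) (Fin m) ℝ) (hR : R.PosDef)
    (Se : Matrix (Fin l) (Fin l) ℝ) (hSe : Se.PosSemidef)
    (Sig : Matrix (Fin n) (Fin n) ℝ)
    (hSig : Sig = B * Se * Bᵀ)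
    (hcompat : lam • (G * R⁻¹ * Gᵀ) = B * Se * Bᵀ)
    (hrelax : (1 / lam) * q * Ψ x - f ⬝ᵥ grad Ψ x
      - (1 / 2) * (hess Ψ x * Sig).trace ≤ 0)
    (V : (Fin n → ℝ) → ℝ) (hV : V = fun y => -lam * Real.log (Ψ y))
    (u : Fin m → ℝ) (hu : u = -((R⁻¹ * Gᵀ).mulVec (grad V x))) :
    ((lam / (2 * Ψ x ^ 2)) * (grad Ψ x ⬝ᵥ Sig.mulVec (grad Ψ x))
        = (1 / 2) * (grad V x ⬝ᵥ (G * R⁻¹ * Gᵀ).mulVec (grad V x)) ∧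
      (1 / 2) * (grad V x ⬝ᵥ (G * R⁻¹ * Gᵀ).mulVec (grad V x))
        = (1 / 2) * (u ⬝ᵥ R.mulVec u)) ∧
    grad V x ⬝ᵥ (f + G.mulVec u)
        + (1 / 2) * (hess V x * (B * Se * Bᵀ)).trace ≤
      -q - (1 / 2) * (u ⬝ᵥ R.mulVec u) := by
  set c : ℝ := Ψ x with hc
  have hcpos : 0 < c := hpos x hxU
  have hcne : c ≠ 0 := ne_of_gt hcpos
  have hlamne : lam ≠ 0 := ne_of_gt hlam
  set g : Fin n → ℝ := grad Ψ x with hg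
  -- differentiability facts
  have hd : ∀ y ∈ U, DifferentiableAt ℝ Ψ y := fun y hy =>
    ((hC2.contDiffAt (hU.mem_nhds hy)).differentiableAt (by norm_num))
  have hVd : ∀ y ∈ U, HasFDerivAt V ((-lam * (Ψ y)⁻¹) • fderiv ℝ Ψ y) y := by
    intro y hy
    rw [hV]
    have h1 := ((hd y hy).hasFDerivAt.log (ne_of_gt (hpos y hy)))
    simpa [smul_smul, neg_smul, -neg_mul] using h1.const_mul (-lam)
  -- grad V
  have hgradV : grad V x = (-(lam / c)) • g := by
    funext i
    have := (hVd x hxU).fderiv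
    simp only [grad, this, ContinuousLinearMap.smul_apply, smul_eq_mul, hg, Pi.smul_apply]
    rw [← hc]
    ring
  -- second derivative machinery
  have hF : ContDiffAt ℝ 1 (fderiv ℝ Ψ) x :=
    (hC2.contDiffAt (hU.mem_nhds hxU)).fderiv_right (by norm_num)
  have hF' : HasFDerivAt (fderiv ℝ Ψ) (fderiv ℝ (fderiv ℝ Ψ) x) x :=
    (hF.differentiableAt one_ne_zero).hasFDerivAt
  have hb : ∀ j : Fin n, HasFDerivAt (fun y => fderiv ℝ Ψ y (Pi.single j 1))
      ((ContinuousLinearMap.apply ℝ ℝ (Pi.single j 1 : Fin n → ℝ)).comp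
        (fderiv ℝ (fderiv ℝ Ψ) x)) x := fun j =>
    (ContinuousLinearMap.apply ℝ ℝ (Pi.single j 1 : Fin n → ℝ)).hasFDerivAt.comp x hF'
  have hhessΨ : ∀ i j : Fin n, hess Ψ x i j
      = fderiv ℝ (fderiv ℝ Ψ) x (Pi.single i 1) (Pi.single j 1) := by
    intro i j
    show fderiv ℝ (fun y => fderiv ℝ Ψ y (Pi.single j 1)) x (Pi.single i 1) = _
    rw [(hb j).fderiv]
    simp
  have hinv : HasFDerivAt (fun y => (Ψ y)⁻¹) ((-(c ^ 2)⁻¹) • fderiv ℝ Ψ x) x := by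
    have h := (hasFDerivAt_inv (ne_of_gt hcpos)).comp x (hd x hxU).hasFDerivAt
    refine h.congr_fderiv ?_
    ext v
    simp [mul_comm]
  -- Hessian of V entrywise
  have hhessV : ∀ i j : Fin n, hess V x i j
      = -(lam / c) * hess Ψ x i j + lam / c ^ 2 * (g i * g j) := by
    intro i j
    have hev : (fun y => fderiv ℝ V y (Pi.single j 1))
        =ᶠ[nhds x] fun y => -lam * ((Ψ y)⁻¹ * fderiv ℝ Ψ y (Pi.single j 1)) := by
      filter_upwards [hU.mem_nhds hxU] with y hy
      rw [(hVd y hy).fderiv]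
      simp
      ring
    have hprod : HasFDerivAt (fun y => -lam * ((Ψ y)⁻¹ * fderiv ℝ Ψ y (Pi.single j 1)))
        ((-lam) • ((Ψ x)⁻¹ • ((ContinuousLinearMap.apply ℝ ℝ (Pi.single j 1 : Fin n → ℝ)).comp
            (fderiv ℝ (fderiv ℝ Ψ) x))
          + (fderiv ℝ Ψ x (Pi.single j 1)) • ((-(c ^ 2)⁻¹) • fderiv ℝ Ψ x))) x :=
      (hinv.mul (hb j)).const_mul (-lam)
    show fderiv ℝ (fun y => fderiv ℝ V y (Pi.single j 1)) x (Pi.single i 1) = _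
    rw [hev.fderiv_eq, hprod.fderiv]
    have h1 : hess Ψ x i j = fderiv ℝ (fderiv ℝ Ψ) x (Pi.single i 1) (Pi.single j 1) :=
      hhessΨ i j
    have h2 : g i = fderiv ℝ Ψ x (Pi.single i 1) := rfl
    have h3 : g j = fderiv ℝ Ψ x (Pi.single j 1) := rfl
    simp only [ContinuousLinearMap.smul_apply, ContinuousLinearMap.add_apply,
      ContinuousLinearMap.comp_apply, ContinuousLinearMap.apply_apply, smul_eq_mul]
    rw [h1, ← h2, ← h3, ← hc]
    field_simp
    ring
  -- hess V as a matrix identity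
  have hhessVmat : hess V x
      = (lam / c ^ 2) • Matrix.vecMulVec g g - (lam / c) • hess Ψ x := by
    ext i j
    simp [hhessV i j, Matrix.vecMulVec_apply]
    ring
  -- R facts
  have hRT : Rᵀ = R := hR.1.eq
  have hRdet : IsUnit R.det := isUnit_iff_ne_zero.mpr (ne_of_gt hR.det_pos)
  have hRinv : R⁻¹ * R = 1 := Matrix.nonsing_inv_mul R hRdet
  have hRinvT : R⁻¹ᵀ = R⁻¹ := by rw [Matrix.transpose_nonsing_inv, hRT]
  -- abbreviations
  set M : Matrix (Fin n) (Fin n) ℝ := G * R⁻¹ * Gᵀ with hM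
  have hSigM : Sig = lam • M := by rw [hSig, ← hcompat]
  set P : ℝ := g ⬝ᵥ Sig.mulVec g with hP
  -- part (a)
  have hwMw : grad V x ⬝ᵥ M.mulVec (grad V x) = (lam / c ^ 2) * P := by
    rw [hgradV, hP, hSigM]
    simp only [Matrix.mulVec_smul, Matrix.smul_mulVec, dotProduct_smul,
      smul_dotProduct, smul_eq_mul]
    ring
  have parta : (lam / (2 * c ^ 2)) * P = (1 / 2) * (grad V x ⬝ᵥ M.mulVec (grad V x)) := by
    rw [hwMw]; ring
  -- part (b)
  have hMT : (R⁻¹ * Gᵀ)ᵀ * (R * (R⁻¹ * Gᵀ)) = M := by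
    rw [Matrix.transpose_mul, Matrix.transpose_transpose, hRinvT,
      show R * (R⁻¹ * Gᵀ) = Gᵀ by
        rw [← Matrix.mul_assoc, Matrix.mul_nonsing_inv R hRdet, Matrix.one_mul]]
  have partb : (1 / 2) * (grad V x ⬝ᵥ M.mulVec (grad V x)) = (1 / 2) * (u ⬝ᵥ R.mulVec u) := by
    rw [hu]
    rw [neg_dotProduct, Matrix.mulVec_neg, dotProduct_neg, neg_neg,
      Matrix.mulVec_mulVec, dot_mulVec_mulVec, hMT]
  have hKu : (1 / 2) * (u ⬝ᵥ R.mulVec u) = lam / (2 * c ^ 2) * P := by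
    rw [← partb, hwMw]; ring
  refine ⟨⟨parta, partb⟩, ?_⟩
  -- part (c)
  have hGu : G.mulVec u = -(M.mulVec (grad V x)) := by
    rw [hu, Matrix.mulVec_neg, Matrix.mulVec_mulVec, hM, Matrix.mul_assoc]
  have e1 : grad V x ⬝ᵥ (f + G.mulVec u)
      = -(lam / c) * (f ⬝ᵥ g) - (lam / c ^ 2) * P := by
    rw [dotProduct_add, hGu, dotProduct_neg, hwMw]
    congr 1
    rw [hgradV, smul_dotProduct, dotProduct_comm]
    simp [smul_eq_mul]
  set T : ℝ := (hess Ψ x * Sig).trace with hT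
  have e2 : (hess V x * (B * Se * Bᵀ)).trace = (lam / c ^ 2) * P - (lam / c) * T := by
    rw [← hSig, hhessVmat, Matrix.sub_mul, Matrix.trace_sub, Matrix.smul_mul,
      Matrix.smul_mul, Matrix.trace_smul, Matrix.trace_smul, trace_vecMulVec_mul]
    simp [hP, hT, smul_eq_mul]
  -- the relaxed HJB inequality
  have hkey : q ≤ (lam / c) * (f ⬝ᵥ g + (1 / 2) * T) := by
    have h1 : (1 / lam) * q * c ≤ f ⬝ᵥ g + (1 / 2) * T := by
      rw [hg, hT]
      linarith [hrelax]
    have h2 : 0 < lam / c := div_pos hlam hcpos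
    have h3 := mul_le_mul_of_nonneg_left h1 (le_of_lt h2)
    calc q = (lam / c) * ((1 / lam) * q * c) := by field_simp
    _ ≤ _ := h3
  rw [e1, e2, hKu]
  nlinarith [hkey]
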